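/- arXiv:2308.02684 — 11 statements merged into one kernel-verified Lean document; each statement's English description precedes it below -/
import Mathlib

section
/- (Hummer principle) Let n ≥ 1 and consider a deck of 2n cards. For every configuration c of the 2n-card deck reachable from the all-face-down initial configuration c₀ by CATO shuffles, the number of even positions p with (c p).2 = true equals the number of odd positions p with (c p).2 = true; that is, the cardinality of {p : Fin (2n) | p.val % 2 = 0 ∧ (c p).2 = true} equals the cardinality of {p : Fin (2n) | p.val % 2 = 1 ∧ (c p).2 = true}. -/
/-- A configuration of an `n`-card deck: position `p` holds the card that originally
occupied position `(c p).1`, and it is face-up iff `(c p).2 = true`. -/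
abbrev Deck (n : ℕ) : Type := Fin n → Fin n × Bool

/-- The all-face-down initial configuration `c₀`. -/
def initial {n : ℕ} : Deck n := fun p => (p, false)

/-- The cut `α`: sends `c` to `p ↦ c ((p + 1) % n)`. -/
def cut {n : ℕ} (c : Deck n) : Deck n :=
  fun p => c ⟨(p.val + 1) % n, Nat.mod_lt _ (Nat.lt_of_le_of_lt (Nat.zero_le _) p.isLt)⟩

/-- The inverse cut `α⁻¹`: sends `c` to `p ↦ c ((p + n - 1) % n)`. -/
def invCut {n : ℕ} (c : Deck n) : Deck n :=
  fun p => c ⟨(p.val + n - 1) % n, Nat.mod_lt _ (Nat.lt_of_le_of_lt (Nat.zero_le _) p.isLt)⟩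

/-- The flip `δ_k` (and also `τ_m` for odd `m`): turn over the top `k` cards as a single card.
For `0 < k ≤ n` it agrees with `c` at positions `p ≥ k`, and at `p < k` its value is
`(q, !b)` where `(q, b) = c (k - 1 - p)`. -/
def flipTop {n : ℕ} (k : ℕ) (c : Deck n) : Deck n := fun p =>
  if h : p.val < k ∧ k ≤ n then
    ((c ⟨k - 1 - p.val, by omega⟩).1, !(c ⟨k - 1 - p.val, by omega⟩).2)
  else c p

/-- The deal `γ_j`: its value at `p < n - j` is `c (p + j)`, and at `p ≥ n - j` is
`c (n - 1 - p)`. -/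
def deal {n : ℕ} (j : ℕ) (c : Deck n) : Deck n := fun p =>
  if h : p.val < n - j then c ⟨p.val + j, by omega⟩
  else c ⟨n - 1 - p.val, by have := p.isLt; omega⟩

/-- The move `ω_l`: its value at `p < n - l - 1` is `c (p + l + 1)`, at `p = n - l - 1`
is `c l`, and at `p ≥ n - l` is `c (p - (n - l))`. -/
def omegaMove {n : ℕ} (l : ℕ) (c : Deck n) : Deck n := fun p =>
  if hl : l < n then
    if _h1 : p.val < n - l - 1 then c ⟨p.val + l + 1, by omega⟩
    else if _h2 : p.val = n - l - 1 then c ⟨l, hl⟩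
    else c ⟨p.val - (n - l), by have := p.isLt; omega⟩
  else c p

/-- `Reachable X c c'` : `c'` is obtained from `c` by finitely many successive
applications of maps in `X`. -/
def Reachable {n : ℕ} (X : Set (Deck n → Deck n)) (c c' : Deck n) : Prop :=
  Relation.ReflTransGen (fun a b => ∃ f ∈ X, b = f a) c c'

/-- The CATO shuffles on a deck of `2 * n` cards: the cut `α` together with the
flips `δ_k` for even `k` with `0 < k ≤ 2 * n`. -/
def CATO (n : ℕ) : Set (Deck (2 * n) → Deck (2 * n)) :=
  {cut} ∪ {f | ∃ k, Even k ∧ 0 < k ∧ k ≤ 2 * n ∧ f = flipTop k}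

/-- The signed invariant. -/
def Tinv {n : ℕ} (c : Deck n) : ℤ :=
  ∑ p : Fin n, (if (c p).2 then 1 else -1) * (-1) ^ p.val

lemma neg_one_pow_mod (a : ℕ) : ((-1 : ℤ)) ^ a = (-1) ^ (a % 2) := by
  conv_lhs => rw [← Nat.div_add_mod a 2]
  rw [pow_add, pow_mul]
  norm_num

lemma Tinv_cut {n : ℕ} (hn : 0 < n) (hev : 2 ∣ n) (c : Deck n) :
    Tinv (cut c) = - Tinv c := by
  unfold Tinv cut
  rw [← Finset.sum_neg_distrib]
  apply Fintype.sum_bijective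
    (fun p : Fin n => (⟨(p.val + 1) % n, Nat.mod_lt _ hn⟩ : Fin n))
  · haveI : NeZero n := ⟨by omega⟩
    have he : ∀ p : Fin n, (⟨(p.val + 1) % n, Nat.mod_lt _ hn⟩ : Fin n) = p + 1 := by
      intro p
      ext
      simp [Fin.add_def, Fin.val_one']
    have : (fun p : Fin n => (⟨(p.val + 1) % n, Nat.mod_lt _ hn⟩ : Fin n))
        = fun p => p + 1 := funext he
    rw [this]
    exact (Equiv.addRight (1 : Fin n)).bijective
  · intro p
    simp only
    have h1 : ((-1 : ℤ)) ^ ((p.val + 1) % n) = (-1) ^ (p.val + 1) := by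
      rw [neg_one_pow_mod ((p.val + 1) % n), Nat.mod_mod_of_dvd _ hev,
        ← neg_one_pow_mod]
    rw [h1, pow_succ]
    ring

lemma Tinv_flip {n k : ℕ} (hk : Even k) (hk0 : 0 < k) (hkn : k ≤ n) (c : Deck n) :
    Tinv (flipTop k c) = Tinv c := by
  unfold Tinv flipTop
  apply Fintype.sum_bijective
    (fun p : Fin n => if h : p.val < k then (⟨k - 1 - p.val, by omega⟩ : Fin n) else p)
  · apply Function.Involutive.bijective
    intro p
    by_cases h : p.val < k
    · simp only [h, dif_pos]
      have h2 : k - 1 - p.val < k := by omega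
      simp only [h2, dif_pos]
      ext
      simp
      omega
    · simp [h]
  · intro p
    by_cases h : p.val < k
    · simp only [h, hkn, and_self, dif_pos, true_and]
      have hpar : ((-1 : ℤ)) ^ (k - 1 - p.val) = -(-1) ^ p.val := by
        obtain ⟨m, hm⟩ := hk
        rw [neg_one_pow_mod (k - 1 - p.val), neg_one_pow_mod p.val]
        have : (k - 1 - p.val) % 2 = (p.val + 1) % 2 := by omega
        rw [this]
        rcases Nat.mod_two_eq_zero_or_one p.val with h2 | h2 <;>
          · rw [Nat.add_mod, h2] <;> norm_num
      rw [hpar]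
      cases hb : (c ⟨k - 1 - p.val, by omega⟩).2 <;> simp <;> ring
    · have h' : ¬ (p.val < k ∧ k ≤ n) := by tauto
      simp [h, h']

lemma Tinv_initial {n : ℕ} (hev : 2 ∣ n) : Tinv (initial : Deck n) = 0 := by
  unfold Tinv initial
  simp only [Bool.false_eq_true, if_false, neg_one_mul, Finset.sum_neg_distrib]
  rw [Fin.sum_univ_eq_sum_range (fun i => ((-1 : ℤ)) ^ i), neg_one_geom_sum]
  simp [(even_iff_two_dvd).2 hev]

lemma Tinv_reachable {n : ℕ} (hn : 1 ≤ n) (c : Deck (2 * n))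
    (hreach : Reachable (CATO n) initial c) : Tinv c = 0 := by
  induction hreach with
  | refl => exact Tinv_initial ⟨n, rfl⟩
  | tail _ hstep ih =>
    obtain ⟨f, hf, rfl⟩ := hstep
    rcases hf with hf | ⟨k, hke, hk0, hkn, rfl⟩
    · rw [Set.mem_singleton_iff.mp hf, Tinv_cut (by omega) ⟨n, rfl⟩, ih, neg_zero]
    · rw [Tinv_flip hke hk0 hkn, ih]

/-- **Hummer principle.** For a deck of `2n` cards, all initially face down, after any
number of CATO shuffles the number of face-up cards in even positions equals the number
of face-up cards in odd positions. -/
theorem hummer_principle (n : ℕ) (hn : 1 ≤ n) (c : Deck (2 * n))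
    (hreach : Reachable (CATO n) initial c) :
    (Finset.univ.filter fun p : Fin (2 * n) => p.val % 2 = 0 ∧ (c p).2 = true).card =
      (Finset.univ.filter fun p : Fin (2 * n) => p.val % 2 = 1 ∧ (c p).2 = true).card := by
  have hT : Tinv c = 0 := Tinv_reachable hn c hreach
  have key : Tinv c =
      2 * ((Finset.univ.filter fun p : Fin (2 * n) =>
          p.val % 2 = 0 ∧ (c p).2 = true).card : ℤ) -
      2 * ((Finset.univ.filter fun p : Fin (2 * n) =>
          p.val % 2 = 1 ∧ (c p).2 = true).card : ℤ) -
      ∑ p : Fin (2 * n), ((-1 : ℤ)) ^ p.val := by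
    rw [← Finset.sum_boole, ← Finset.sum_boole, Finset.mul_sum, Finset.mul_sum,
      ← Finset.sum_sub_distrib, ← Finset.sum_sub_distrib]
    unfold Tinv
    apply Finset.sum_congr rfl
    intro p _
    rw [neg_one_pow_mod p.val]
    rcases Nat.mod_two_eq_zero_or_one p.val with h2 | h2 <;>
      cases hb : (c p).2 <;> simp [h2] <;> norm_num
  have hsum : ∑ p : Fin (2 * n), ((-1 : ℤ)) ^ p.val = 0 := by
    rw [Fin.sum_univ_eq_sum_range (fun i => ((-1 : ℤ)) ^ i), neg_one_geom_sum]
    simp [even_iff_two_dvd.2 ⟨n, rfl⟩]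
  rw [hT, hsum] at key
  have : ((Finset.univ.filter fun p : Fin (2 * n) =>
      p.val % 2 = 0 ∧ (c p).2 = true).card : ℤ) =
      ((Finset.univ.filter fun p : Fin (2 * n) =>
      p.val % 2 = 1 ∧ (c p).2 = true).card : ℤ) := by linarith
  exact_mod_cast this
end

section
/- Let n ≥ 2 and let k be odd with 3 ≤ k ≤ 2n. For every configuration c of a 2n-card deck, applying to c successively (leftmost letter applied first) the moves of the word β (αβ)^{k−2} α^{−(k−2)} · β (αβ)^{k−3} α^{−(k−3)} · ⋯ · β (αβ) α^{−1} · β yields the configuration c′ that reverses the order of the top k cards without changing any orientation: c′ p = c (k − 1 − p) for p < k and c′ p = c p for p ≥ k. -/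
/-- The block `β (αβ)^i α^{-i}` applied to a configuration (leftmost letter first):
first `β = δ₂`, then `i` times (`α` then `β`), then `i` times `α⁻¹`. -/
def block {n : ℕ} (i : ℕ) (c : Deck n) : Deck n :=
  invCut^[i] ((fun d => flipTop 2 (cut d))^[i] (flipTop 2 c))

/-- Apply, leftmost first, the blocks `β (αβ)^i α^{-i}` for `i = m, m - 1, …, 1`. -/
def blocks {n : ℕ} : ℕ → Deck n → Deck n
  | 0, c => c
  | i + 1, c => blocks i (block (i + 1) c)

namespace RevAux

variable {N : ℕ}

def fl (x : Fin N × Bool) : Fin N × Bool := (x.1, !x.2)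

def bflip (m : ℕ) (x : Fin N × Bool) : Fin N × Bool := if m % 2 = 0 then x else fl x

lemma c_congr (c : Deck N) {a b : Fin N} (h : a.val = b.val) : c a = c b := by
  congr 1; exact Fin.ext h

lemma fl_fl (x : Fin N × Bool) : fl (fl x) = x := by simp [fl]

lemma bflip_fl (m : ℕ) (x : Fin N × Bool) : bflip m (fl x) = bflip (m + 1) x := by
  rcases Nat.mod_two_eq_zero_or_one m with h | h <;>
    simp [bflip, fl, Nat.add_mod, h]

lemma fl_bflip (m : ℕ) (x : Fin N × Bool) : fl (bflip m x) = bflip (m + 1) x := by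
  rcases Nat.mod_two_eq_zero_or_one m with h | h <;>
    simp [bflip, fl, Nat.add_mod, h]

lemma bflip_two (m : ℕ) (x : Fin N × Bool) : bflip (m + 2) x = bflip m x := by
  simp [bflip, Nat.add_mod]

lemma bflip_even (m : ℕ) (hm : m % 2 = 0) (x : Fin N × Bool) : bflip m x = x := by
  simp [bflip, hm]

lemma flipTop2_lt (hN : 2 ≤ N) (c : Deck N) (p : Fin N) (hp : p.val < 2) :
    flipTop 2 c p = fl (c ⟨2 - 1 - p.val, by omega⟩) := by
  unfold flipTop; rw [dif_pos ⟨hp, hN⟩]; rfl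

lemma flipTop2_ge (c : Deck N) (p : Fin N) (hp : 2 ≤ p.val) :
    flipTop 2 c p = c p := by
  unfold flipTop; rw [dif_neg (by omega : ¬(p.val < 2 ∧ 2 ≤ N))]

lemma cut_eval (c : Deck N) (p : Fin N) (h : (p.val + 1) % N < N) :
    cut c p = c ⟨(p.val + 1) % N, h⟩ := rfl

lemma invCut_iter (hN : 1 ≤ N) (i : ℕ) (d : Deck N) (p : Fin N) :
    invCut^[i] d p = d ⟨(p.val + i * (N - 1)) % N, Nat.mod_lt _ (by omega)⟩ := by
  induction i generalizing p with
  | zero =>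
    simp only [Function.iterate_zero, id]
    exact c_congr d (by have := p.isLt; simp [Nat.mod_eq_of_lt this])
  | succ i ih =>
    rw [Function.iterate_succ_apply']
    have h1 : (p.val + N - 1) % N < N := Nat.mod_lt _ (by omega)
    rw [show invCut (invCut^[i] d) p = (invCut^[i] d) ⟨(p.val + N - 1) % N, h1⟩ from rfl]
    rw [ih]
    refine c_congr d ?_
    show ((p.val + N - 1) % N + i * (N - 1)) % N = (p.val + (i + 1) * (N - 1)) % N
    conv_rhs => rw [Nat.succ_mul]
    rw [Nat.mod_add_mod]
    congr 1
    omega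


lemma iter_formula (hN : 2 ≤ N) (c : Deck N) :
    ∀ j, ∀ _hj : j ≤ N - 2, ∀ v : ℕ, ∀ hv : v < N,
      (∀ _h0 : v = 0,
        (fun d => flipTop 2 (cut d))^[j] (flipTop 2 c) ⟨v, hv⟩ = fl (c ⟨j + 1, by omega⟩)) ∧
      (∀ _h1 : v = 1,
        (fun d => flipTop 2 (cut d))^[j] (flipTop 2 c) ⟨v, hv⟩ = bflip (j + 1) (c ⟨0, by omega⟩)) ∧
      (∀ _h2 : 2 ≤ v, ∀ _h3 : v + j + 1 ≤ N,
        (fun d => flipTop 2 (cut d))^[j] (flipTop 2 c) ⟨v, hv⟩ = c ⟨v + j, by omega⟩) ∧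
      (∀ _h2 : 2 ≤ v, ∀ _h4 : N ≤ v + j,
        (fun d => flipTop 2 (cut d))^[j] (flipTop 2 c) ⟨v, hv⟩ =
          fl (c ⟨v + j + 1 - N, by omega⟩)) := by
  intro j
  induction j with
  | zero =>
    intro _ v hv
    refine ⟨?_, ?_, ?_, ?_⟩
    · intro h0
      simp only [Function.iterate_zero, id]
      rw [flipTop2_lt hN c ⟨v, hv⟩ (by show v < 2; omega)]
      exact congrArg fl (c_congr c (show 2 - 1 - v = 0 + 1 by omega))
    · intro h1
      simp only [Function.iterate_zero, id]
      rw [flipTop2_lt hN c ⟨v, hv⟩ (by show v < 2; omega)]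
      rw [show bflip 1 (c ⟨0, by omega⟩) = fl (c ⟨0, by omega⟩) from by simp [bflip]]
      exact congrArg fl (c_congr c (show 2 - 1 - v = 0 by omega))
    · intro h2 _
      simp only [Function.iterate_zero, id]
      rw [flipTop2_ge c ⟨v, hv⟩ h2]
      exact c_congr c (show v = v + 0 by omega)
    · intro _ h
      omega
  | succ j ih =>
    intro hj v hv
    have hj' : j ≤ N - 2 := by omega
    have hN3 : 3 ≤ N := by omega
    have hjN : j + 3 ≤ N := by omega
    set g : Deck N := (fun d => flipTop 2 (cut d))^[j] (flipTop 2 c) with hgdef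
    have hstep : ∀ q : Fin N,
        (fun d => flipTop 2 (cut d))^[j + 1] (flipTop 2 c) q = flipTop 2 (cut g) q := by
      intro q
      rw [Function.iterate_succ_apply']
    have hg := ih hj'
    have cuteq : ∀ (w : ℕ) (hw : w < N) (u : ℕ) (hu : u < N),
        (w + 1) % N = u → cut g ⟨w, hw⟩ = g ⟨u, hu⟩ := by
      intro w hw u hu h
      rw [cut_eval g ⟨w, hw⟩ (Nat.mod_lt _ (by omega))]
      exact c_congr g h
    refine ⟨?_, ?_, ?_, ?_⟩
    · intro h0
      rw [hstep _, flipTop2_lt hN (cut g) ⟨v, hv⟩ (by show v < 2; omega)]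
      rw [show (⟨2 - 1 - (⟨v, hv⟩ : Fin N).val, by omega⟩ : Fin N)
            = ⟨2 - 1 - v, by omega⟩ from rfl]
      rw [cuteq (2 - 1 - v) (by omega) 2 (by omega)
            (by rw [show 2 - 1 - v + 1 = 2 by omega]; exact Nat.mod_eq_of_lt (by omega))]
      rw [(hg 2 (by omega)).2.2.1 (le_refl 2) (by omega)]
      exact congrArg fl (c_congr c (show 2 + j = j + 1 + 1 by omega))
    · intro h1
      rw [hstep _, flipTop2_lt hN (cut g) ⟨v, hv⟩ (by show v < 2; omega)]
      rw [show (⟨2 - 1 - (⟨v, hv⟩ : Fin N).val, by omega⟩ : Fin N)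
            = ⟨2 - 1 - v, by omega⟩ from rfl]
      rw [cuteq (2 - 1 - v) (by omega) 1 (by omega)
            (by rw [show 2 - 1 - v + 1 = 1 by omega]; exact Nat.mod_eq_of_lt (by omega))]
      rw [(hg 1 (by omega)).2.1 rfl]
      rw [fl_bflip]
    · intro h2 hle
      rw [hstep _, flipTop2_ge (cut g) ⟨v, hv⟩ h2]
      rw [cuteq v hv (v + 1) (by omega) (Nat.mod_eq_of_lt (by omega))]
      rw [(hg (v + 1) (by omega)).2.2.1 (by omega) (by omega)]
      exact c_congr c (show v + 1 + j = v + (j + 1) by omega)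
    · intro h2 hge
      rw [hstep _, flipTop2_ge (cut g) ⟨v, hv⟩ h2]
      by_cases hw : v + 1 = N
      · rw [cuteq v hv 0 (by omega) (by rw [hw, Nat.mod_self])]
        rw [(hg 0 (by omega)).1 rfl]
        exact congrArg fl (c_congr c (show j + 1 = v + (j + 1) + 1 - N by omega))
      · rw [cuteq v hv (v + 1) (by omega) (Nat.mod_eq_of_lt (by omega))]
        rw [(hg (v + 1) (by omega)).2.2.2 (by omega) (by omega)]
        exact congrArg fl (c_congr c (show v + 1 + j + 1 - N = v + (j + 1) + 1 - N by omega))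

lemma block_formula (hN : 2 ≤ N) (c : Deck N) (i : ℕ) (hi : i ≤ N - 2) :
    ∀ v : ℕ, ∀ hv : v < N,
      (∀ _h1 : v ≤ i, block i c ⟨v, hv⟩ = fl (c ⟨v + 1, by omega⟩)) ∧
      (∀ _h2 : v = i + 1, block i c ⟨v, hv⟩ = bflip (i + 1) (c ⟨0, by omega⟩)) ∧
      (∀ _h3 : i + 1 < v, block i c ⟨v, hv⟩ = c ⟨v, hv⟩) := by
  intro v hv
  have hkey : i * N = i * (N - 1) + i := by
    conv_lhs => rw [show N = (N - 1) + 1 by omega]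
    ring
  have hg := iter_formula hN c i hi
  have hmain : ∀ (w : ℕ) (hw : w < N), (v + i * (N - 1)) % N = w →
      block i c ⟨v, hv⟩ =
        (fun d => flipTop 2 (cut d))^[i] (flipTop 2 c) ⟨w, hw⟩ := by
    intro w hw h
    unfold block
    rw [invCut_iter (by omega) i _ ⟨v, hv⟩]
    exact c_congr _ h
  refine ⟨?_, ?_, ?_⟩
  · intro h1
    by_cases hvi : v = i
    · have hq : (v + i * (N - 1)) % N = 0 := by
        have : v + i * (N - 1) = i * N := by omega
        rw [this, Nat.mul_mod_left]
      rw [hmain 0 (by omega) hq, (hg 0 (by omega)).1 rfl]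
      exact congrArg fl (c_congr c (show i + 1 = v + 1 by omega))
    · have hq : (v + i * (N - 1)) % N = v + N - i := by
        have e2 : (i - 1) * N = i * N - N := Nat.sub_one_mul i N
        have e3 : 1 * N ≤ i * N := Nat.mul_le_mul_right N (by omega)
        have e4 : v + i * (N - 1) = (v + N - i) + (i - 1) * N := by omega
        rw [e4, Nat.add_mul_mod_self_right]
        exact Nat.mod_eq_of_lt (by omega)
      rw [hmain (v + N - i) (by omega) hq,
        (hg (v + N - i) (by omega)).2.2.2 (by omega) (by omega)]
      exact congrArg fl (c_congr c (show v + N - i + i + 1 - N = v + 1 by omega))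
  · intro h2
    have hq : (v + i * (N - 1)) % N = 1 := by
      have : v + i * (N - 1) = 1 + i * N := by omega
      rw [this, Nat.add_mul_mod_self_right]
      exact Nat.mod_eq_of_lt (by omega)
    rw [hmain 1 (by omega) hq, (hg 1 (by omega)).2.1 rfl]
  · intro h3
    have hq : (v + i * (N - 1)) % N = v - i := by
      have : v + i * (N - 1) = (v - i) + i * N := by omega
      rw [this, Nat.add_mul_mod_self_right]
      exact Nat.mod_eq_of_lt (by omega)
    rw [hmain (v - i) (by omega) hq,
      (hg (v - i) (by omega)).2.2.1 (by omega) (by omega)]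
    exact c_congr c (show v - i + i = v by omega)

lemma bflip_one (x : Fin N × Bool) : bflip 1 x = fl x := by simp [bflip]

lemma blocks_formula (hN : 2 ≤ N) :
    ∀ m : ℕ, ∀ _hm1 : 1 ≤ m, ∀ _hm2 : m ≤ N - 2, ∀ c : Deck N, ∀ v : ℕ, ∀ hv : v < N,
      (∀ _h0 : v = 0, blocks m c ⟨v, hv⟩ = bflip m (c ⟨m, by omega⟩)) ∧
      (∀ _h1 : v = 1, blocks m c ⟨v, hv⟩ = bflip m (c ⟨m + 1, by omega⟩)) ∧
      (∀ _h2 : 2 ≤ v, ∀ _h3 : v ≤ m + 1,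
        blocks m c ⟨v, hv⟩ = bflip (m + 1) (c ⟨m + 1 - v, by omega⟩)) ∧
      (∀ _h4 : m + 1 < v, blocks m c ⟨v, hv⟩ = c ⟨v, hv⟩) := by
  intro m
  induction m with
  | zero => intro h; omega
  | succ m ih =>
    intro _ hm2 c v hv
    by_cases hm0 : m = 0
    · subst hm0
      have hb := block_formula hN c 1 (by omega)
      have e1 : blocks 1 c ⟨v, hv⟩ = block 1 c ⟨v, hv⟩ := rfl
      refine ⟨?_, ?_, ?_, ?_⟩
      · intro h0
        rw [e1, (hb v hv).1 (by omega), bflip_one]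
        exact congrArg fl (c_congr c (show v + 1 = 1 by omega))
      · intro h1
        rw [e1, (hb v hv).1 (by omega), bflip_one]
        exact congrArg fl (c_congr c (show v + 1 = 1 + 1 by omega))
      · intro h2 h3
        rw [e1, (hb v hv).2.1 (by omega)]
        exact congrArg (bflip 2) (c_congr c (show (0 : ℕ) = 1 + 1 - v by omega))
      · intro h4
        rw [e1, (hb v hv).2.2 (by omega)]
    · have hm1 : 1 ≤ m := by omega
      have hb := block_formula hN c (m + 1) (by omega)
      have hih := ih hm1 (by omega) (block (m + 1) c) v hv
      refine ⟨?_, ?_, ?_, ?_⟩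
      · intro h0
        rw [show blocks (m + 1) c ⟨v, hv⟩ = blocks m (block (m + 1) c) ⟨v, hv⟩ from rfl]
        rw [hih.1 h0, (hb m (by omega)).1 (by omega), bflip_fl]
      · intro h1
        rw [show blocks (m + 1) c ⟨v, hv⟩ = blocks m (block (m + 1) c) ⟨v, hv⟩ from rfl]
        rw [hih.2.1 h1, (hb (m + 1) (by omega)).1 (by omega), bflip_fl]
      · intro h2 h3
        rw [show blocks (m + 1) c ⟨v, hv⟩ = blocks m (block (m + 1) c) ⟨v, hv⟩ from rfl]
        by_cases hv2 : v ≤ m + 1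
        · rw [hih.2.2.1 h2 hv2, (hb (m + 1 - v) (by omega)).1 (by omega), bflip_fl]
          exact congrArg (bflip (m + 1 + 1)) (c_congr c (show m + 1 - v + 1 = m + 1 + 1 - v by omega))
        · rw [hih.2.2.2 (by omega), (hb v hv).2.1 (by omega)]
          exact congrArg (bflip (m + 1 + 1)) (c_congr c (show (0 : ℕ) = m + 1 + 1 - v by omega))
      · intro h4
        rw [show blocks (m + 1) c ⟨v, hv⟩ = blocks m (block (m + 1) c) ⟨v, hv⟩ from rfl]
        rw [hih.2.2.2 (by omega), (hb v hv).2.2 (by omega)]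

end RevAux

/-- For odd `k` with `3 ≤ k ≤ 2n`, applying to `c` the word
`β (αβ)^{k-2} α^{-(k-2)} ⋯ β (αβ) α^{-1} β` (leftmost letter first) yields the
configuration that reverses the order of the top `k` cards without changing any
orientation. -/
theorem word_reverses_top_k_odd (n : ℕ) (hn : 2 ≤ n) (k : ℕ) (hko : Odd k)
    (hk3 : 3 ≤ k) (hkn : k ≤ 2 * n) (c : Deck (2 * n))
    (hc : Function.Bijective fun p => (c p).1) :
    ∀ p : Fin (2 * n),
      (∀ h : p.val < k,
        flipTop 2 (blocks (k - 2) c) p = c ⟨k - 1 - p.val, by omega⟩) ∧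
      (k ≤ p.val → flipTop 2 (blocks (k - 2) c) p = c p) := by
  intro p
  have hN : 2 ≤ 2 * n := by omega
  have hk1 : k % 2 = 1 := Nat.odd_iff.mp hko
  have hbl := RevAux.blocks_formula (N := 2 * n) hN (k - 2) (by omega) (by omega) c
  constructor
  · intro h
    by_cases h2 : p.val < 2
    · rcases (show p.val = 0 ∨ p.val = 1 by omega) with h0 | h1
      · rw [RevAux.flipTop2_lt hN _ p h2]
        have e1 : (blocks (k - 2) c) ⟨2 - 1 - p.val, by omega⟩
            = blocks (k - 2) c ⟨1, by omega⟩ :=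
          RevAux.c_congr _ (show 2 - 1 - p.val = 1 by omega)
        rw [e1, (hbl 1 (by omega)).2.1 rfl, RevAux.fl_bflip,
          RevAux.bflip_even _ (by omega)]
        exact RevAux.c_congr c (show k - 2 + 1 = k - 1 - p.val by omega)
      · rw [RevAux.flipTop2_lt hN _ p h2]
        have e1 : (blocks (k - 2) c) ⟨2 - 1 - p.val, by omega⟩
            = blocks (k - 2) c ⟨0, by omega⟩ :=
          RevAux.c_congr _ (show 2 - 1 - p.val = 0 by omega)
        rw [e1, (hbl 0 (by omega)).1 rfl, RevAux.fl_bflip,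
          RevAux.bflip_even _ (by omega)]
        exact RevAux.c_congr c (show k - 2 = k - 1 - p.val by omega)
    · rw [RevAux.flipTop2_ge _ p (by omega)]
      have e1 := (hbl p.val p.isLt).2.2.1 (by omega) (by omega)
      refine Eq.trans e1 ?_
      rw [RevAux.bflip_even _ (by omega)]
      exact RevAux.c_congr c (show k - 2 + 1 - p.val = k - 1 - p.val by omega)
  · intro hk
    rw [RevAux.flipTop2_ge _ p (by omega)]
    exact (hbl p.val p.isLt).2.2.2 (by omega)
end

section
/- Let n ≥ 1. On configurations of a 2n-card deck, the submonoid (under composition) of bijections of the set of configurations generated by {α, β} equals the submonoid generated by {α} ∪ {δ_k : k even, 2 ≤ k ≤ 2n}; that is, every finite composition of cuts and even flips can be realized as a finite composition of α and β, and conversely. -/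
namespace CATOAux

variable {N : ℕ}

@[simp] theorem val_mk (a : ℕ) (h : a < N) : (⟨a, h⟩ : Fin N).val = a := rfl

/-- `cut` as an element of the endomorphism monoid. -/
def Cut (N : ℕ) : Function.End (Deck N) := cut

/-- `invCut` as an element of the endomorphism monoid. -/
def ICut (N : ℕ) : Function.End (Deck N) := invCut

/-- `flipTop k` as an element of the endomorphism monoid. -/
def Flip (N k : ℕ) : Function.End (Deck N) := flipTop k

/-- A mod-free description of `cut`'s index map. -/
def cσ : Fin N → Fin N := fun p =>
  if _h : p.val + 1 = N then ⟨0, by omega⟩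
  else ⟨p.val + 1, by have := p.isLt; omega⟩

/-- A mod-free description of `invCut`'s index map. -/
def iσ : Fin N → Fin N := fun p =>
  if _h : p.val = 0 then ⟨N - 1, by have := p.isLt; omega⟩
  else ⟨p.val - 1, by have := p.isLt; omega⟩

theorem cut_eq (c : Deck N) (p : Fin N) : cut c p = c (cσ p) := by
  have hp := p.isLt
  simp only [cut, cσ]
  split
  · next h => congr 1; exact Fin.ext (by simp [h])
  · next h => congr 1; exact Fin.ext (by simpa using Nat.mod_eq_of_lt (by omega))

theorem invCut_eq (c : Deck N) (p : Fin N) : invCut c p = c (iσ p) := by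
  have hp := p.isLt
  simp only [invCut, iσ]
  split
  · next h =>
      congr 1
      apply Fin.ext
      have h1 : p.val + N - 1 = N - 1 := by omega
      simpa [h1] using Nat.mod_eq_of_lt (show N - 1 < N by omega)
  · next h =>
      congr 1
      apply Fin.ext
      have h1 : p.val + N - 1 = (p.val - 1) + N := by omega
      simp only [h1, Nat.add_mod_right, val_mk]
      exact Nat.mod_eq_of_lt (by omega)

theorem flip_congr (c : Deck N) {x y : Fin N} (h : x.val = y.val) :
    ((c x).1, !(c x).2) = ((c y).1, !(c y).2) := by
  rw [show x = y from Fin.ext h]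

theorem deck_congr (c : Deck N) {x y : Fin N} (h : x.val = y.val) : c x = c y := by
  rw [show x = y from Fin.ext h]

theorem cut_pow_apply (m : ℕ) (c : Deck N) (p : Fin N) :
    ((Cut N ^ m) c) p
      = c ⟨(p.val + m) % N, Nat.mod_lt _ (Nat.lt_of_le_of_lt (Nat.zero_le _) p.isLt)⟩ := by
  induction m generalizing c with
  | zero =>
      show c p = _
      exact deck_congr c (by simp [Nat.mod_eq_of_lt p.isLt])
  | succ m ih =>
      rw [pow_succ]
      show ((Cut N ^ m) (Cut N c)) p = _
      rw [ih (Cut N c)]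
      show cut c _ = _
      simp only [cut]
      apply deck_congr
      simp only [val_mk]
      rw [Nat.mod_add_mod]
      congr 1

theorem invCut_eq_pow (hN : 0 < N) : ICut N = Cut N ^ (N - 1) := by
  funext c p
  rw [cut_pow_apply]
  show invCut c p = _
  simp only [invCut]
  apply deck_congr
  simp only [val_mk]
  congr 1
  omega

theorem flip_eval_pos (k a : ℕ) (ha : a < N) (c : Deck N) (h1 : a < k) (h2 : k ≤ N) :
    flipTop k c ⟨a, ha⟩
      = ((c ⟨k - 1 - a, by omega⟩).1, !(c ⟨k - 1 - a, by omega⟩).2) :=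
  dif_pos ⟨h1, h2⟩

theorem flip_eval_neg (k a : ℕ) (ha : a < N) (c : Deck N) (h : ¬(a < k ∧ k ≤ N)) :
    flipTop k c ⟨a, ha⟩ = c ⟨a, ha⟩ :=
  dif_neg h

theorem cut_eval_lt (a : ℕ) (ha : a < N) (c : Deck N) (h : a + 1 < N) :
    cut c ⟨a, ha⟩ = c ⟨a + 1, h⟩ :=
  deck_congr c (Nat.mod_eq_of_lt h)

theorem cut_eval_eq (a : ℕ) (ha : a < N) (c : Deck N) (h : a + 1 = N) :
    cut c ⟨a, ha⟩ = c ⟨0, by omega⟩ :=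
  deck_congr c (by simp [h])

theorem inv_eval_pos (a : ℕ) (ha : a < N) (c : Deck N) (h : 0 < a) :
    invCut c ⟨a, ha⟩ = c ⟨a - 1, by omega⟩ :=
  deck_congr c (by
    simp only [val_mk]
    rw [show a + N - 1 = (a - 1) + N by omega, Nat.add_mod_right]
    exact Nat.mod_eq_of_lt (by omega))

theorem inv_eval_zero (a : ℕ) (ha : a < N) (c : Deck N) (h : a = 0) :
    invCut c ⟨a, ha⟩ = c ⟨N - 1, by omega⟩ :=
  deck_congr c (by
    simp only [val_mk]
    rw [show a + N - 1 = N - 1 by omega]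
    exact Nat.mod_eq_of_lt (by omega))

/-- The key identity: `δ_{k+2} = α⁻¹ β α β α⁻¹ β α⁻¹ δ_k α δ_k α δ_k`. -/
theorem key (k : ℕ) (hk2 : 2 ≤ k) (hkN : k + 2 ≤ N) :
    Flip N (k + 2) =
      ICut N * Flip N 2 * Cut N * Flip N 2 * ICut N * Flip N 2 * ICut N *
        Flip N k * Cut N * Flip N k * Cut N * Flip N k := by
  funext c p
  show flipTop (k + 2) c p =
    invCut (flipTop 2 (cut (flipTop 2 (invCut (flipTop 2 (invCut
      (flipTop k (cut (flipTop k (cut (flipTop k c))))))))))) p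
  rcases p with ⟨pv, hp⟩
  by_cases hp0 : pv = 0
  · rw [flip_eval_pos (k + 2) pv (by omega) _ (by omega) (by omega),
      inv_eval_zero pv (by omega) _ (by omega),
      flip_eval_neg 2 (N - 1) (by omega) _ (by omega),
      cut_eval_eq (N - 1) (by omega) _ (by omega),
      flip_eval_pos 2 0 (by omega) _ (by omega) (by omega),
      inv_eval_pos (2 - 1 - 0) (by omega) _ (by omega),
      flip_eval_pos 2 (2 - 1 - 0 - 1) (by omega) _ (by omega) (by omega),
      inv_eval_pos (2 - 1 - (2 - 1 - 0 - 1)) (by omega) _ (by omega),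
      flip_eval_pos k (2 - 1 - (2 - 1 - 0 - 1) - 1) (by omega) _ (by omega) (by omega),
      cut_eval_lt (k - 1 - (2 - 1 - (2 - 1 - 0 - 1) - 1)) (by omega) _ (by omega),
      flip_eval_neg k (k - 1 - (2 - 1 - (2 - 1 - 0 - 1) - 1) + 1) (by omega) _ (by omega),
      cut_eval_lt (k - 1 - (2 - 1 - (2 - 1 - 0 - 1) - 1) + 1) (by omega) _ (by omega),
      flip_eval_neg k (k - 1 - (2 - 1 - (2 - 1 - 0 - 1) - 1) + 1 + 1) (by omega) _ (by omega)]
    simp only [Bool.not_not]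
    exact flip_congr _ (by simp only [val_mk]; omega)
  · by_cases hp1 : pv = 1
    · rw [flip_eval_pos (k + 2) pv (by omega) _ (by omega) (by omega),
        inv_eval_pos pv (by omega) _ (by omega),
        flip_eval_pos 2 (pv - 1) (by omega) _ (by omega) (by omega),
        cut_eval_lt (2 - 1 - (pv - 1)) (by omega) _ (by omega),
        flip_eval_neg 2 (2 - 1 - (pv - 1) + 1) (by omega) _ (by omega),
        inv_eval_pos (2 - 1 - (pv - 1) + 1) (by omega) _ (by omega),
        flip_eval_pos 2 (2 - 1 - (pv - 1) + 1 - 1) (by omega) _ (by omega) (by omega),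
        inv_eval_zero (2 - 1 - (2 - 1 - (pv - 1) + 1 - 1)) (by omega) _ (by omega),
        flip_eval_neg k (N - 1) (by omega) _ (by omega),
        cut_eval_eq (N - 1) (by omega) _ (by omega),
        flip_eval_pos k 0 (by omega) _ (by omega) (by omega),
        cut_eval_lt (k - 1 - 0) (by omega) _ (by omega),
        flip_eval_neg k (k - 1 - 0 + 1) (by omega) _ (by omega)]
      simp only [Bool.not_not]
      exact flip_congr _ (by simp only [val_mk]; omega)
    · by_cases hp2 : pv = 2
      · rw [flip_eval_pos (k + 2) pv (by omega) _ (by omega) (by omega),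
          inv_eval_pos pv (by omega) _ (by omega),
          flip_eval_pos 2 (pv - 1) (by omega) _ (by omega) (by omega),
          cut_eval_lt (2 - 1 - (pv - 1)) (by omega) _ (by omega),
          flip_eval_pos 2 (2 - 1 - (pv - 1) + 1) (by omega) _ (by omega) (by omega),
          inv_eval_zero (2 - 1 - (2 - 1 - (pv - 1) + 1)) (by omega) _ (by omega),
          flip_eval_neg 2 (N - 1) (by omega) _ (by omega),
          inv_eval_pos (N - 1) (by omega) _ (by omega),
          flip_eval_neg k (N - 1 - 1) (by omega) _ (by omega),
          cut_eval_lt (N - 1 - 1) (by omega) _ (by omega),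
          flip_eval_neg k (N - 1 - 1 + 1) (by omega) _ (by omega),
          cut_eval_eq (N - 1 - 1 + 1) (by omega) _ (by omega),
          flip_eval_pos k 0 (by omega) _ (by omega) (by omega)]
        simp only [Bool.not_not]
        exact flip_congr _ (by simp only [val_mk]; omega)
      · by_cases hpk : pv < k + 2
        · rw [flip_eval_pos (k + 2) pv (by omega) _ (by omega) (by omega),
            inv_eval_pos pv (by omega) _ (by omega),
            flip_eval_neg 2 (pv - 1) (by omega) _ (by omega),
            cut_eval_lt (pv - 1) (by omega) _ (by omega),
            flip_eval_neg 2 (pv - 1 + 1) (by omega) _ (by omega),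
            inv_eval_pos (pv - 1 + 1) (by omega) _ (by omega),
            flip_eval_neg 2 (pv - 1 + 1 - 1) (by omega) _ (by omega),
            inv_eval_pos (pv - 1 + 1 - 1) (by omega) _ (by omega),
            flip_eval_pos k (pv - 1 + 1 - 1 - 1) (by omega) _ (by omega) (by omega),
            cut_eval_lt (k - 1 - (pv - 1 + 1 - 1 - 1)) (by omega) _ (by omega),
            flip_eval_pos k (k - 1 - (pv - 1 + 1 - 1 - 1) + 1) (by omega) _ (by omega) (by omega),
            cut_eval_lt (k - 1 - (k - 1 - (pv - 1 + 1 - 1 - 1) + 1)) (by omega) _ (by omega),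
            flip_eval_pos k (k - 1 - (k - 1 - (pv - 1 + 1 - 1 - 1) + 1) + 1) (by omega) _
              (by omega) (by omega)]
          simp only [Bool.not_not]
          exact flip_congr _ (by simp only [val_mk]; omega)
        · rw [flip_eval_neg (k + 2) pv (by omega) _ (by omega),
            inv_eval_pos pv (by omega) _ (by omega),
            flip_eval_neg 2 (pv - 1) (by omega) _ (by omega),
            cut_eval_lt (pv - 1) (by omega) _ (by omega),
            flip_eval_neg 2 (pv - 1 + 1) (by omega) _ (by omega),
            inv_eval_pos (pv - 1 + 1) (by omega) _ (by omega),
            flip_eval_neg 2 (pv - 1 + 1 - 1) (by omega) _ (by omega),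
            inv_eval_pos (pv - 1 + 1 - 1) (by omega) _ (by omega),
            flip_eval_neg k (pv - 1 + 1 - 1 - 1) (by omega) _ (by omega),
            cut_eval_lt (pv - 1 + 1 - 1 - 1) (by omega) _ (by omega),
            flip_eval_neg k (pv - 1 + 1 - 1 - 1 + 1) (by omega) _ (by omega),
            cut_eval_lt (pv - 1 + 1 - 1 - 1 + 1) (by omega) _ (by omega),
            flip_eval_neg k (pv - 1 + 1 - 1 - 1 + 1 + 1) (by omega) _ (by omega)]
          exact deck_congr _ (by simp only [val_mk]; omega)


theorem flip_mem {N : ℕ} (k : ℕ) (hke : Even k) (hk2 : 2 ≤ k) (hkN : k ≤ N) :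
    Flip N k ∈ Submonoid.closure ({Cut N, Flip N 2} : Set (Function.End (Deck N))) := by
  induction k using Nat.strong_induction_on with
  | _ k ih =>
    have hcut : Cut N ∈ Submonoid.closure ({Cut N, Flip N 2} : Set (Function.End (Deck N))) :=
      Submonoid.subset_closure (Set.mem_insert _ _)
    have hb : Flip N 2 ∈ Submonoid.closure ({Cut N, Flip N 2} : Set (Function.End (Deck N))) :=
      Submonoid.subset_closure (Set.mem_insert_iff.mpr (Or.inr rfl))
    rcases eq_or_lt_of_le hk2 with h2 | h4
    · rw [← h2]; exact hb
    · obtain ⟨m, hm⟩ := hke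
      have hinv : ICut N ∈ Submonoid.closure ({Cut N, Flip N 2} : Set (Function.End (Deck N))) := by
        rw [invCut_eq_pow (by omega)]
        exact pow_mem hcut _
      have hd : Flip N (k - 2) ∈
          Submonoid.closure ({Cut N, Flip N 2} : Set (Function.End (Deck N))) :=
        ih (k - 2) (by omega) ⟨m - 1, by omega⟩ (by omega) (by omega)
      have hkey := key (N := N) (k - 2) (by omega) (by omega)
      rw [show k - 2 + 2 = k by omega] at hkey
      rw [hkey]
      exact mul_mem (mul_mem (mul_mem (mul_mem (mul_mem (mul_mem (mul_mem (mul_mem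
        (mul_mem (mul_mem (mul_mem hinv hb) hcut) hb) hinv) hb) hinv) hd) hcut) hd)
        hcut) hd

end CATOAux


/-- On a deck of `2n` cards, the submonoid (under composition) generated by the cut `α`
and `β = δ₂` equals the submonoid generated by `α` together with all flips `δ_k` for even
`k` with `2 ≤ k ≤ 2n`: every finite composition of cuts and even flips is a finite
composition of `α` and `β`, and conversely. -/
theorem cato_monoid_generated_by_cut_and_beta (n : ℕ) (hn : 1 ≤ n) :
    Submonoid.closure ({cut, flipTop 2} : Set (Function.End (Deck (2 * n)))) =
      Submonoid.closure
        (({cut} ∪ {f | ∃ k, Even k ∧ 2 ≤ k ∧ k ≤ 2 * n ∧ f = flipTop k} :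
          Set (Function.End (Deck (2 * n))))) := by
  apply le_antisymm
  · refine Submonoid.closure_le.mpr ?_
    intro f hf
    rcases Set.mem_insert_iff.mp hf with rfl | hf2
    · exact Submonoid.subset_closure (Set.mem_union_left _ rfl)
    · rw [Set.mem_singleton_iff.mp hf2]
      exact Submonoid.subset_closure
        (Set.mem_union_right _ ⟨2, ⟨1, rfl⟩, le_refl 2, by omega, rfl⟩)
  · refine Submonoid.closure_le.mpr ?_
    intro f hf
    rw [Set.mem_union] at hf
    rcases hf with hf1 | ⟨k, hke, hk2, hkN, rfl⟩
    · rw [Set.mem_singleton_iff.mp hf1]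
      exact Submonoid.subset_closure (Set.mem_insert _ _)
    · exact CATOAux.flip_mem k hke hk2 hkN
end

section
/- (Baby Hummer invariant) Consider configurations of a 4-card deck. If a configuration c has exactly one maloriented card (i.e., the cardinality of {p : Fin 4 | (c p).2 = true} is 1 or 3), then every configuration reachable from c by finitely many applications of the cut α and the flip β also has exactly one maloriented card. -/
lemma deckCard_eq (c : Deck 4) :
    (Finset.univ.filter fun p : Fin 4 => (c p).2 = true).card =
      (if (c 0).2 then 1 else 0) + (if (c 1).2 then 1 else 0) +
      (if (c 2).2 then 1 else 0) + (if (c 3).2 then 1 else 0) := by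
  rw [Finset.card_filter, Fin.sum_univ_four]

lemma cut_eval (c : Deck 4) (p : Fin 4) :
    cut c p = c ⟨(p.val + 1) % 4, Nat.mod_lt _ (by omega)⟩ := rfl

lemma odd_cut (c : Deck 4)
    (h : Odd (Finset.univ.filter fun p : Fin 4 => (c p).2 = true).card) :
    Odd (Finset.univ.filter fun p : Fin 4 => (cut c p).2 = true).card := by
  rw [deckCard_eq] at h ⊢
  have h0 : cut c 0 = c 1 := rfl
  have h1 : cut c 1 = c 2 := rfl
  have h2 : cut c 2 = c 3 := rfl
  have h3 : cut c 3 = c 0 := rfl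
  rw [h0, h1, h2, h3, Nat.odd_iff] at *
  omega

lemma odd_flip (c : Deck 4)
    (h : Odd (Finset.univ.filter fun p : Fin 4 => (c p).2 = true).card) :
    Odd (Finset.univ.filter fun p : Fin 4 => (flipTop 2 c p).2 = true).card := by
  rw [deckCard_eq] at h ⊢
  have h0 : flipTop 2 c 0 = ((c 1).1, !(c 1).2) := rfl
  have h1 : flipTop 2 c 1 = ((c 0).1, !(c 0).2) := rfl
  have h2 : flipTop 2 c 2 = c 2 := rfl
  have h3 : flipTop 2 c 3 = c 3 := rfl
  rw [h0, h1, h2, h3, Nat.odd_iff] at *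
  cases hb0 : (c 0).2 <;> cases hb1 : (c 1).2 <;> simp [hb0, hb1] at h ⊢ <;> omega

/-- **Baby Hummer invariant.** If a configuration of a 4-card deck has exactly one
maloriented card (i.e. `|{p | (c p).2 = true}| ∈ {1, 3}`), then every configuration
reachable from it by the cut `α` and the flip `β = δ₂` also has exactly one
maloriented card. -/
theorem baby_hummer_one_maloriented_invariant (c c' : Deck 4)
    (hc : Function.Bijective fun p => (c p).1)
    (hone : (Finset.univ.filter fun p : Fin 4 => (c p).2 = true).card = 1 ∨
      (Finset.univ.filter fun p : Fin 4 => (c p).2 = true).card = 3)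
    (hreach : Reachable ({cut, flipTop 2} : Set (Deck 4 → Deck 4)) c c') :
    (Finset.univ.filter fun p : Fin 4 => (c' p).2 = true).card = 1 ∨
      (Finset.univ.filter fun p : Fin 4 => (c' p).2 = true).card = 3 := by
  have hodd : Odd (Finset.univ.filter fun p : Fin 4 => (c' p).2 = true).card := by
    induction hreach with
    | refl =>
        rcases hone with h | h <;> rw [h] <;> decide
    | tail _ step ih =>
        rcases step with ⟨f, hf, rfl⟩
        rcases hf with rfl | rfl
        · exact odd_cut _ ih
        · exact odd_flip _ ih
  have hle : (Finset.univ.filter fun p : Fin 4 => (c' p).2 = true).card ≤ 4 := by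
    calc _ ≤ (Finset.univ : Finset (Fin 4)).card := Finset.card_filter_le _ _
    _ = 4 := by simp
  rcases hodd with ⟨k, hk⟩
  omega
end

section
/- (Baby Hummer tracking) Consider the 4-card configuration c₁ given by c₁ 0 = (0, true) and c₁ p = (p, false) for p ≠ 0 (the array (1̄, 2, 3, 4)). For every configuration c reachable from c₁ by finitely many applications of the cut α and the flip β: c has exactly one maloriented card, and if q is the unique position whose orientation differs from the other three and r is the unique position with (c r).1 = 2 (the card originally third from the top), then q ≡ r + 2 (mod 4). -/
/-- The Baby Hummer starting configuration `(1̄, 2, 3, 4)`: all cards in their original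
positions, only the top card face up. -/
def babyHummerStart : Deck 4 := fun p => (p, decide (p = 0))

/-- Abstraction of a deck: orientation bit and "is this the card originally at 2" bit. -/
def Abs (c : Deck 4) : Fin 4 → Bool × Bool :=
  fun p => ((c p).2, decide ((c p).1 = (2 : Fin 4)))

def cutA (g : Fin 4 → Bool × Bool) : Fin 4 → Bool × Bool :=
  fun p => g ⟨(p.val + 1) % 4, Nat.mod_lt _ (Nat.lt_of_le_of_lt (Nat.zero_le _) p.isLt)⟩

def flipA (g : Fin 4 → Bool × Bool) : Fin 4 → Bool × Bool := fun p =>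
  if h : p.val < 2 ∧ 2 ≤ 4 then
    (!(g ⟨2 - 1 - p.val, by omega⟩).1, (g ⟨2 - 1 - p.val, by omega⟩).2)
  else g p

def InvA (g : Fin 4 → Bool × Bool) : Prop :=
  ((Finset.univ.filter fun p : Fin 4 => (g p).1 = true).card = 1 ∨
    (Finset.univ.filter fun p : Fin 4 => (g p).1 = true).card = 3) ∧
  ∀ q r : Fin 4, (∀ p : Fin 4, p ≠ q → (g p).1 ≠ (g q).1) → (g r).2 = true → q = r + 2

instance : DecidablePred InvA := fun g => by unfold InvA; infer_instance

lemma abs_cut (c : Deck 4) : Abs (cut c) = cutA (Abs c) := rfl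

lemma abs_flip (c : Deck 4) : Abs (flipTop 2 c) = flipA (Abs c) := by
  funext p
  simp only [Abs, flipTop, flipA]
  split <;> rfl

set_option maxRecDepth 4000 in
lemma invA_cut : ∀ g, InvA g → InvA (cutA g) := by decide

set_option maxRecDepth 4000 in
lemma invA_flip : ∀ g, InvA g → InvA (flipA g) := by decide

lemma invA_start : InvA (Abs babyHummerStart) := by decide

/-- **Baby Hummer tracking.** Every configuration reachable from `(1̄, 2, 3, 4)` by the
cut `α` and the flip `β = δ₂` has exactly one maloriented card, and if `q` is the unique
position whose orientation differs from the other three and `r` is the position of the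
card originally third from the top, then `q ≡ r + 2 (mod 4)`. -/

theorem baby_hummer_tracking (c : Deck 4)
    (hreach : Reachable ({cut, flipTop 2} : Set (Deck 4 → Deck 4)) babyHummerStart c) :
    ((Finset.univ.filter fun p : Fin 4 => (c p).2 = true).card = 1 ∨
      (Finset.univ.filter fun p : Fin 4 => (c p).2 = true).card = 3) ∧
    ∀ q r : Fin 4, (∀ p : Fin 4, p ≠ q → (c p).2 ≠ (c q).2) → (c r).1 = 2 →
      q = r + 2 := by
  have h : InvA (Abs c) := by
    induction hreach with
    | refl => exact invA_start
    | tail _ hstep ih =>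
      obtain ⟨f, hf, rfl⟩ := hstep
      rcases hf with rfl | rfl
      · exact abs_cut _ ▸ invA_cut _ ih
      · exact abs_flip _ ▸ invA_flip _ ih
  obtain ⟨h1, h2⟩ := h
  refine ⟨h1, fun q r hq hr => h2 q r hq ?_⟩
  simpa [Abs] using hr
end

section
/- (Odd Hummer Principle) Let n be odd. For every configuration c of an n-card deck reachable from the all-face-down initial configuration c₀ by DATO shuffles, every face-up card sits at a position whose parity differs from that of its original position: for every position p with (c p).2 = true, p.val % 2 ≠ ((c p).1).val % 2. In particular, the face-up cards in even positions were originally in odd positions, and the face-up cards in odd positions were originally in even positions. -/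
/-- The DATO shuffles on a deck of `n` cards: the flips `δ_k` for even `k` with
`0 < k ≤ n` together with the deals `γ_j` for even `j` with `0 < j ≤ n`. -/
def DATO (n : ℕ) : Set (Deck n → Deck n) :=
  {f | ∃ k, Even k ∧ 0 < k ∧ k ≤ n ∧ f = flipTop k} ∪
    {f | ∃ j, Even j ∧ 0 < j ∧ j ≤ n ∧ f = deal j}

def HummerInv {n : ℕ} (c : Deck n) : Prop :=
  ∀ p : Fin n, (c p).2 = true ↔ p.val % 2 ≠ ((c p).1).val % 2

lemma hummerInv_initial {n : ℕ} : HummerInv (initial (n := n)) := by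
  intro p; simp [initial]

lemma hummerInv_flipTop {n k : ℕ} (hk : Even k) (c : Deck n)
    (h : HummerInv c) : HummerInv (flipTop k c) := by
  intro p
  have hk2 : k % 2 = 0 := Nat.even_iff.mp hk
  unfold flipTop
  split
  · next hpk =>
    obtain ⟨hp, hkn⟩ := hpk
    have hinv := h ⟨k - 1 - p.val, by omega⟩
    simp only at hinv ⊢
    rcases hb : (c ⟨k - 1 - p.val, by omega⟩).2 with _ | _
    · rw [hb] at hinv
      simp only [Bool.false_eq_true, false_iff, not_not] at hinv
      simp only [Bool.not_false, true_iff]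
      omega
    · rw [hb] at hinv
      simp only [true_iff] at hinv
      simp only [Bool.not_true, Bool.false_eq_true, false_iff, not_not]
      omega
  · exact h p

lemma hummerInv_deal {n j : ℕ} (hn : Odd n) (hj : Even j) (c : Deck n)
    (h : HummerInv c) : HummerInv (deal j c) := by
  intro p
  have hn2 : n % 2 = 1 := Nat.odd_iff.mp hn
  have hj2 : j % 2 = 0 := Nat.even_iff.mp hj
  have hp := p.isLt
  unfold deal
  split
  · next hpj =>
    have hinv := h ⟨p.val + j, by omega⟩
    have hpar : (p.val + j) % 2 = p.val % 2 := by omega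
    simpa [hpar] using hinv
  · next hpj =>
    have hinv := h ⟨n - 1 - p.val, by omega⟩
    have hpar : (n - 1 - p.val) % 2 = p.val % 2 := by omega
    simpa [hpar] using hinv

/-- **Odd Hummer Principle.** For a deck with an odd number `n` of cards, all initially
face down, after any number of DATO shuffles every face-up card sits at a position whose
parity differs from that of its original position. -/
theorem odd_hummer_principle (n : ℕ) (hn : Odd n) (c : Deck n)
    (hreach : Reachable (DATO n) initial c) :
    ∀ p : Fin n, (c p).2 = true → p.val % 2 ≠ ((c p).1).val % 2 := by
  suffices hI : HummerInv c by exact fun p hp => (hI p).mp hp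
  induction hreach with
  | refl => exact hummerInv_initial
  | tail _ hstep ih =>
    obtain ⟨f, hf, rfl⟩ := hstep
    rcases hf with ⟨k, hke, _, _, rfl⟩ | ⟨j, hje, _, _, rfl⟩
    · exact hummerInv_flipTop hke _ ih
    · exact hummerInv_deal hn hje _ ih
end

section
/- (Three-attribute regularity, odd case) Let n be odd and color the card originally at position q red if q is even and black if q is odd (so the deck starts with colors alternating). For every configuration c reachable from the all-face-down initial configuration c₀ by DATO shuffles, and for every position p: the card at p is red if and only if (p is even ↔ the card at p is face-down); formally, ((c p).1).val % 2 = 0 ↔ (p.val % 2 = 0 ↔ (c p).2 = false). Hence any two of the three attributes (color, orientation, parity of position) determine the third. -/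
/-- **Three-attribute regularity, odd case.** Color the card originally at position `q`
red iff `q` is even, so the deck starts alternating. For an odd-size deck, all cards
initially face down, after any number of DATO shuffles the card at position `p` is red
iff (`p` is even ↔ the card at `p` is face-down). Hence any two of the three attributes
(color, orientation, parity of position) determine the third. -/
theorem three_attribute_regularity_odd (n : ℕ) (hn : Odd n) (c : Deck n)
    (hreach : Reachable (DATO n) initial c) :
    ∀ p : Fin n, (((c p).1).val % 2 = 0 ↔ (p.val % 2 = 0 ↔ (c p).2 = false)) := by
  obtain ⟨m, hm⟩ := hn
  induction hreach with
  | refl => intro p; simp [initial]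
  | @tail d e _ hstep ih =>
    obtain ⟨f, hf, rfl⟩ := hstep
    rcases hf with ⟨k, ⟨k2, hk2⟩, hk0, hkn, rfl⟩ | ⟨j, ⟨j2, hj2⟩, hj0, hjn, rfl⟩
    · intro p
      by_cases h : p.val < k ∧ k ≤ n
      · simp only [flipTop, dif_pos h]
        rw [ih ⟨k - 1 - p.val, by omega⟩]
        have hq : (k - 1 - p.val) % 2 = 0 ↔ ¬ (p.val % 2 = 0) := by omega
        rw [hq]
        rcases Bool.eq_false_or_eq_true (d ⟨k - 1 - p.val, by omega⟩).2 with hb | hb <;>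
          rw [hb] <;> simp
      · simp only [flipTop, dif_neg h]; exact ih p
    · intro p
      by_cases h : p.val < n - j
      · simp only [deal, dif_pos h]
        rw [ih ⟨p.val + j, by omega⟩]
        have hq : (p.val + j) % 2 = p.val % 2 := by omega
        rw [hq]
      · simp only [deal, dif_neg h]
        rw [ih ⟨n - 1 - p.val, by have := p.isLt; omega⟩]
        have hq : (n - 1 - p.val) % 2 = p.val % 2 := by have := p.isLt; omega
        rw [hq]
end

section
/- (Three-attribute regularity, even case) Let the deck have 2n cards (n ≥ 1) and color the card originally at position q red if q is even and black if q is odd (so the deck starts with colors alternating). For every configuration c reachable from the all-face-down initial configuration c₀ by CATO shuffles, there exists a Boolean b such that for every position p: ((c p).1 is even) ↔ ((p is even) XOR (c p).2 XOR b); equivalently, the Boolean value (isRed of the card at p) XOR (p.val % 2 = 0) XOR (c p).2 is the same at every position p. Hence, for a card whose attributes are known before the shuffles, any two of the three attributes (color, orientation, parity of position) determine the third. -/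
/-- **Three-attribute regularity, even case.** Color the card originally at position `q`
red iff `q` is even, so the `2n`-card deck starts alternating. All cards initially face
down, after any number of CATO shuffles there is a Boolean `b` such that at every
position `p`, (the card at `p` is red) ↔ ((`p` is even) XOR (`c p` is face-up) XOR `b`).
Hence any two of the three attributes (color, orientation, parity of position) determine
the third. -/
theorem three_attribute_regularity_even (n : ℕ) (hn : 1 ≤ n) (c : Deck (2 * n))
    (hreach : Reachable (CATO n) initial c) :
    ∃ b : Bool, ∀ p : Fin (2 * n),
      (((c p).1).val % 2 = 0 ↔ xor (xor (decide (p.val % 2 = 0)) (c p).2) b = true) := by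
  induction hreach with
  | refl =>
    exact ⟨false, fun p => by simp [initial]⟩
  | tail _ hstep ih =>
    rename_i c' c'' hr
    obtain ⟨b, hb⟩ := ih
    obtain ⟨f, hf, rfl⟩ := hstep
    have key1 : ∀ x s b : Bool, ((((!x) ^^ s) ^^ b) = true ↔ (((x ^^ s) ^^ !b) = true)) := by
      decide
    have key2 : ∀ x s b : Bool, ((((!x) ^^ s) ^^ b) = true ↔ (((x ^^ !s) ^^ b) = true)) := by
      decide
    rcases hf with hf | ⟨k, hke, hk0, hkn, rfl⟩
    · -- cut case
      simp only [Set.mem_singleton_iff] at hf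
      subst hf
      refine ⟨!b, fun p => ?_⟩
      have hq := hb ⟨(p.val + 1) % (2 * n), Nat.mod_lt _ (by omega)⟩
      have hd : decide ((((p : ℕ) + 1) % (2 * n)) % 2 = 0) = !decide ((p : ℕ) % 2 = 0) := by
        have h2 : ((p : ℕ) + 1) % (2 * n) % 2 = ((p : ℕ) + 1) % 2 :=
          Nat.mod_mod_of_dvd _ ⟨n, rfl⟩
        rcases Nat.mod_two_eq_zero_or_one (p : ℕ) with h1 | h1 <;>
          simp [h2, h1, Nat.add_mod, decide_eq_true_eq]
      simp only [Fin.val_mk] at hq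
      rw [hd] at hq
      simp only [cut]
      exact hq.trans (key1 _ _ _)
    · -- flip case
      refine ⟨b, fun p => ?_⟩
      by_cases h : (p : ℕ) < k ∧ k ≤ 2 * n
      · have hq := hb ⟨k - 1 - (p : ℕ), by omega⟩
        obtain ⟨m, hm⟩ := hke
        have hd : decide ((k - 1 - (p : ℕ)) % 2 = 0) = !decide ((p : ℕ) % 2 = 0) := by
          rcases Nat.mod_two_eq_zero_or_one (p : ℕ) with h1 | h1 <;>
            simp [h1, decide_eq_true_eq] <;> omega
        simp only [Fin.val_mk] at hq
        rw [hd] at hq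
        simp only [flipTop]
        rw [dif_pos h]
        exact hq.trans (key2 _ _ _)
      · simp only [flipTop]
        rw [dif_neg h]
        exact hb p
end

section
/- (Odd-flip color regularity, even deck) Let the deck have 2n cards (n ≥ 1) and color the card originally at position q red if q is even and black if q is odd (so the deck starts with colors alternating). For every configuration c reachable from the all-face-down initial configuration c₀ by finitely many applications of the cut α and flips τ_m with m odd, there exists a Boolean b such that for every position p: ((c p).1 is even) ↔ ((p is even) ↔ b = true). In particular, all cards in even positions have one color and all cards in odd positions have the other color. -/
/-- **Odd-flip color regularity, even deck.** Color the card originally at position `q`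
red iff `q` is even, so the `2n`-card deck starts alternating. All cards initially face
down, after any number of cuts `α` and odd flips `τ_m` there is a Boolean `b` such that
at every position `p`, (the card at `p` is red) ↔ ((`p` is even) ↔ `b = true`).
In particular all cards in even positions have one color and all cards in odd positions
have the other. -/
theorem odd_flip_color_regularity_even_deck (n : ℕ) (hn : 1 ≤ n) (c : Deck (2 * n))
    (hreach : Reachable
      (({cut} ∪ {f | ∃ m, Odd m ∧ 0 < m ∧ m ≤ 2 * n ∧ f = flipTop m} :
        Set (Deck (2 * n) → Deck (2 * n)))) initial c) :
    ∃ b : Bool, ∀ p : Fin (2 * n),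
      (((c p).1).val % 2 = 0 ↔ (p.val % 2 = 0 ↔ b = true)) := by
  induction hreach with
  | refl => exact ⟨true, fun p => by simp [initial]⟩
  | tail _ hstep ih =>
    obtain ⟨f, hf, rfl⟩ := hstep
    obtain ⟨b, hb⟩ := ih
    rcases hf with hf | ⟨m, hm, hm0, hmle, rfl⟩
    · rw [Set.mem_singleton_iff] at hf
      subst hf
      refine ⟨!b, fun p => ?_⟩
      simp only [cut]
      have h1 := hb ⟨(p.val + 1) % (2 * n), Nat.mod_lt _ (by omega)⟩
      have h2 : ((p.val + 1) % (2 * n)) % 2 = (p.val + 1) % 2 :=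
        Nat.mod_mod_of_dvd _ ⟨n, rfl⟩
      rw [h1]
      simp only [h2]
      cases b <;> simp <;> omega
    · refine ⟨b, fun p => ?_⟩
      simp only [flipTop]
      split
      · next h =>
        have h1 := hb ⟨m - 1 - p.val, by omega⟩
        have hmo : m % 2 = 1 := Nat.odd_iff.mp hm
        have h2 : (m - 1 - p.val) % 2 = p.val % 2 := by omega
        rw [h1]
        simp only [h2]
      · exact hb p
end

section
/- (Odd-flip color regularity, odd deck) Let n be odd and color the card originally at position q red if q is even and black if q is odd (so the deck starts with colors alternating). For every configuration c reachable from the all-face-down initial configuration c₀ by finitely many applications of flips τ_m with m odd and deals γ_j with j even, and for every position p: ((c p).1 is even) ↔ (p is even). In particular, all cards in even positions have one color and all cards in odd positions have the other color. -/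
/-- **Odd-flip color regularity, odd deck.** Color the card originally at position `q`
red iff `q` is even, so the odd-size deck starts alternating. All cards initially face
down, after any number of odd flips `τ_m` and even deals `γ_j`, at every position `p`
the card at `p` is red iff `p` is even. In particular all cards in even positions have
one color and all cards in odd positions have the other. -/
theorem odd_flip_color_regularity_odd_deck (n : ℕ) (hn : Odd n) (c : Deck n)
    (hreach : Reachable
      (({f | ∃ m, Odd m ∧ 0 < m ∧ m ≤ n ∧ f = flipTop m} ∪
        {f | ∃ j, Even j ∧ 0 < j ∧ j ≤ n ∧ f = deal j} :
        Set (Deck n → Deck n))) initial c) :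
    ∀ p : Fin n, (((c p).1).val % 2 = 0 ↔ p.val % 2 = 0) := by
  suffices h : ∀ p : Fin n, ((c p).1).val % 2 = p.val % 2 by
    intro p; rw [h p]
  induction hreach with
  | refl => intro p; rfl
  | tail _ hstep ih =>
    obtain ⟨f, hf, rfl⟩ := hstep
    rcases hf with ⟨m, hm, hm0, hmn, rfl⟩ | ⟨j, hj, hj0, hjn, rfl⟩
    · intro p
      simp only [flipTop]
      split
      · rename_i h
        rw [ih]
        obtain ⟨t, rfl⟩ := hm
        simp only
        omega
      · exact ih p
    · intro p
      simp only [deal]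
      split
      · rw [ih]
        obtain ⟨t, rfl⟩ := hj
        simp only
        omega
      · rw [ih]
        obtain ⟨t, ht⟩ := hn
        have := p.isLt
        simp only
        omega
end

section
/- (Odd Hummer Principle with extra cut-like moves) Let n be odd. For every configuration c of an n-card deck reachable from the all-face-down initial configuration c₀ by finitely many applications of flips δ_k with k even, deals γ_j with j even, and moves ω_l with l odd, every face-up card sits at a position whose parity differs from that of its original position: for every position p with (c p).2 = true, p.val % 2 ≠ ((c p).1).val % 2. -/
def DeckInv {n : ℕ} (c : Deck n) : Prop :=
  ∀ p : Fin n, (c p).2 = true ↔ p.val % 2 ≠ ((c p).1).val % 2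

lemma inv_flip {n k : ℕ} (hk : Even k) (c : Deck n) (h : DeckInv c) : DeckInv (flipTop k c) := by
  intro p
  unfold flipTop
  split
  · rename_i hp
    have := h ⟨k - 1 - p.val, by omega⟩
    simp only [Bool.not_eq_true'] at *
    obtain ⟨a, ha⟩ := hk
    rcases Bool.eq_false_or_eq_true (c ⟨k - 1 - p.val, by omega⟩).2 with hb | hb <;>
      simp [hb] at this ⊢ <;> omega
  · exact h p

lemma inv_deal {n j : ℕ} (hn : Odd n) (hj : Even j) (c : Deck n) (h : DeckInv c) :
    DeckInv (deal j c) := by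
  intro p
  unfold deal
  obtain ⟨a, ha⟩ := hj
  obtain ⟨m, hm⟩ := hn
  split
  · have := h ⟨p.val + j, by omega⟩
    simp only at this ⊢
    rw [this]
    constructor <;> intro <;> omega
  · have := h ⟨n - 1 - p.val, by have := p.isLt; omega⟩
    simp only at this ⊢
    rw [this]
    have := p.isLt
    constructor <;> intro <;> omega

lemma inv_omega {n l : ℕ} (hn : Odd n) (hl : Odd l) (c : Deck n) (h : DeckInv c) :
    DeckInv (omegaMove l c) := by
  intro p
  unfold omegaMove
  obtain ⟨a, ha⟩ := hl
  obtain ⟨m, hm⟩ := hn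
  have hp := p.isLt
  split
  · rename_i hln
    split
    · have := h ⟨p.val + l + 1, by omega⟩
      simp only at this ⊢
      rw [this]; constructor <;> intro <;> omega
    · split
      · have := h ⟨l, hln⟩
        simp only at this ⊢
        rw [this]; constructor <;> intro <;> omega
      · have := h ⟨p.val - (n - l), by omega⟩
        simp only at this ⊢
        rw [this]
        rename_i h1 h2
        constructor <;> intro <;> omega
  · exact h p

/-- **Odd Hummer Principle with extra cut-like moves.** For a deck with an odd number `n`
of cards, all initially face down, after any number of even flips `δ_k`, even deals `γ_j`
and moves `ω_l` with `l` odd and `0 < l < n`, every face-up card sits at a position whose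
parity differs from that of its original position. -/
theorem odd_hummer_with_omega (n : ℕ) (hn : Odd n) (c : Deck n)
    (hreach : Reachable
      (({f | ∃ k, Even k ∧ 0 < k ∧ k ≤ n ∧ f = flipTop k} ∪
        {f | ∃ j, Even j ∧ 0 < j ∧ j ≤ n ∧ f = deal j} ∪
        {f | ∃ l, Odd l ∧ 0 < l ∧ l < n ∧ f = omegaMove l} :
        Set (Deck n → Deck n))) initial c) :
    ∀ p : Fin n, (c p).2 = true → p.val % 2 ≠ ((c p).1).val % 2 := by
  have hinv : DeckInv c := by
    induction hreach with
    | refl => intro p; simp [initial]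
    | tail _ hstep ih =>
      obtain ⟨f, hf, rfl⟩ := hstep
      rcases hf with (⟨k, hk, _, _, rfl⟩ | ⟨j, hj, _, _, rfl⟩) | ⟨l, hl, _, _, rfl⟩
      · exact inv_flip hk _ ih
      · exact inv_deal hn hj _ ih
      · exact inv_omega hn hl _ ih
  exact fun p hp => (hinv p).1 hp
end
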